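/- Let (A, α, ℤ₊^d) be a C*-dynamical system. For F ⊆ [d] set 𝒥_F := (⋂_{j∈F} ker α_j)^⊥ (so 𝒥_∅ = A^⊥ = {0}). Then for every F ⊊ [d] and every i ∈ [d] \ F one has α_i^{-1}(𝒥_F) ∩ 𝒥_{F∪{i}} ⊆ 𝒥_F. Elementwise: if a ∈ A satisfies α_i(a)·b = 0 for every b ∈ ⋂_{j∈F} ker α_j, and a·c = 0 for every c ∈ ⋂_{j∈F∪{i}} ker α_j, then a·b = 0 for every b ∈ ⋂_{j∈F} ker α_j. (This is the specialisation to C*-dynamical systems, via ker φ_n = ker α_n and X_{α,i}^{-1}(I) = α_i^{-1}(I), of the paper's Proposition 4.1 on the ideals 𝒥_F of a strong compactly aligned product system.) -/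
import Mathlib


/-- Let `(A, α, ℤ₊^d)` be a C*-dynamical system (given by `d` pairwise
commuting *-endomorphisms of a C*-algebra `A`).  For `F ⊆ [d]` let
`𝒥_F := (⋂_{j ∈ F} ker α_j)^⊥`.  Then for every `F ⊊ [d]` and `i ∈ [d] \ F` one has
`α_i⁻¹(𝒥_F) ∩ 𝒥_{F ∪ {i}} ⊆ 𝒥_F`, stated elementwise. -/
theorem stmt_0 {A : Type*} [NonUnitalNormedRing A] [StarRing A] [CStarRing A]
    [NormedSpace ℂ A] [IsScalarTower ℂ A A] [SMulCommClass ℂ A A]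
    [CompleteSpace A] [StarModule ℂ A]
    {d : ℕ} (hd : 1 ≤ d) (α : Fin d → (A →⋆ₙₐ[ℂ] A))
    (hcomm : ∀ i j : Fin d, ∀ a : A, α i (α j a) = α j (α i a))
    (F : Finset (Fin d)) (hF : F ⊂ Finset.univ) (i : Fin d) (hi : i ∉ F) (a : A)
    (h1 : ∀ b : A, (∀ j ∈ F, α j b = 0) → α i a * b = 0)
    (h2 : ∀ c : A, (∀ j ∈ insert i F, α j c = 0) → a * c = 0) :
    ∀ b : A, (∀ j ∈ F, α j b = 0) → a * b = 0 := by
  intro b hb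
  -- c := a⋆ * a * b lies in all kernels for j ∈ F ∪ {i}
  have hib : α i a * α i b = 0 := by
    refine h1 (α i b) fun j hj => ?_
    rw [hcomm j i, hb j hj, map_zero]
  have hc : ∀ j ∈ insert i F, α j (star a * a * b) = 0 := by
    intro j hj
    rcases Finset.mem_insert.mp hj with h | h
    · subst h
      rw [map_mul, map_mul, map_star, mul_assoc, hib, mul_zero]
    · rw [map_mul, hb j h, mul_zero]
  have h3 : a * (star a * a * b) = 0 := h2 _ hc
  have h4 : star a * a * b = 0 := by
    rw [← CStarRing.star_mul_self_eq_zero_iff]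
    calc star (star a * a * b) * (star a * a * b)
        = star b * star a * (a * (star a * a * b)) := by
          simp only [star_mul, star_star, mul_assoc]
      _ = 0 := by rw [h3, mul_zero]
  rw [← CStarRing.star_mul_self_eq_zero_iff]
  calc star (a * b) * (a * b) = star b * (star a * a * b) := by
        simp only [star_mul, mul_assoc]
    _ = 0 := by rw [h4, mul_zero]
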